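/- arXiv:2108.08979 — 2 statements merged into one kernel-verified Lean document; each statement's English description precedes it below -/
import Mathlib

section
/- If an orthogonal-factor angle function φ : ℝ² → ℝ satisfies the system of PDEs cos φ − φ_y sin φ = φ_x cos φ and φ_y cos φ = φ_x sin φ on an open set where cos φ ≠ 0, then φ satisfies the ODE φ_x = cos² φ, and hence tan φ(x,y) = x + c(y) for some function c of y alone; moreover, substituting back into φ_y = φ_x tan φ forces c'(y) = x + c(y), which is impossible since c does not depend on x. -/
set_option maxHeartbeats 800000 in
set_option synthInstance.maxHeartbeats 200000 in
/-- The system of PDEs for the orthogonal-factor angle φ has no C¹ solution on any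
nonempty open set where cos φ ≠ 0. -/
theorem stmt3 (φ : ℝ × ℝ → ℝ) (U : Set (ℝ × ℝ)) (hU : IsOpen U) (hne : U.Nonempty)
    (hφ : ContDiff ℝ 1 φ)
    (hcos : ∀ p ∈ U, Real.cos (φ p) ≠ 0)
    (h1 : ∀ p ∈ U, Real.cos (φ p) - fderiv ℝ φ p (0, 1) * Real.sin (φ p)
        = fderiv ℝ φ p (1, 0) * Real.cos (φ p))
    (h2 : ∀ p ∈ U, fderiv ℝ φ p (0, 1) * Real.cos (φ p)
        = fderiv ℝ φ p (1, 0) * Real.sin (φ p)) :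
    False := by
  obtain ⟨p₀, hp₀⟩ := hne
  have hdiff : ∀ p, HasFDerivAt φ (fderiv ℝ φ p) p := fun p =>
    (hφ.differentiable one_ne_zero p).hasFDerivAt
  -- φ_x = cos² φ on U
  have hA : ∀ p ∈ U, fderiv ℝ φ p (1, 0) = Real.cos (φ p) ^ 2 := by
    intro p hp
    have e1 := h1 p hp
    have e2 := h2 p hp
    have pyth := Real.sin_sq_add_cos_sq (φ p)
    have h3 : fderiv ℝ φ p (1, 0) * (Real.sin (φ p) ^ 2 + Real.cos (φ p) ^ 2)
        = Real.cos (φ p) ^ 2 := by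
      linear_combination (-(Real.cos (φ p))) * e1 + (-(Real.sin (φ p))) * e2
    rw [pyth, mul_one] at h3
    exact h3
  -- φ_y = cos φ * sin φ on U
  have hB : ∀ p ∈ U, fderiv ℝ φ p (0, 1) = Real.cos (φ p) * Real.sin (φ p) := by
    intro p hp
    have e2 := h2 p hp
    rw [hA p hp] at e2
    have hcp := hcos p hp
    have : fderiv ℝ φ p (0, 1) * Real.cos (φ p)
        = (Real.cos (φ p) * Real.sin (φ p)) * Real.cos (φ p) := by
      rw [e2]; ring
    exact mul_right_cancel₀ hcp this
  -- the explicit candidate derivative map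
  set F : ℝ × ℝ →L[ℝ] ℝ := ContinuousLinearMap.fst ℝ ℝ ℝ with hF
  set S : ℝ × ℝ →L[ℝ] ℝ := ContinuousLinearMap.snd ℝ ℝ ℝ with hS
  set L : ℝ × ℝ → (ℝ × ℝ →L[ℝ] ℝ) := fun p =>
    (Real.cos (φ p) ^ 2) • F + (Real.cos (φ p) * Real.sin (φ p)) • S with hL
  have hLU : ∀ p ∈ U, fderiv ℝ φ p = L p := by
    intro p hp
    apply ContinuousLinearMap.ext
    intro v
    have hv : v = v.1 • ((1 : ℝ), (0 : ℝ)) + v.2 • ((0 : ℝ), (1 : ℝ)) := by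
      ext <;> simp
    rw [hv, map_add, map_smul, map_smul, hA p hp, hB p hp]
    simp [hL, hF, hS]
    ring
  -- eventually, L is the derivative of φ
  have hev : ∀ᶠ y in nhds p₀, HasFDerivAt φ (L y) y := by
    filter_upwards [hU.mem_nhds hp₀] with y hy
    rw [← hLU y hy]
    exact hdiff y
  -- L is differentiable at p₀
  set D : ℝ × ℝ →L[ℝ] ℝ := fderiv ℝ φ p₀ with hD
  set c := Real.cos (φ p₀) with hcdef
  set s := Real.sin (φ p₀) with hsdef
  have hh : HasFDerivAt (fun p => Real.cos (φ p) ^ 2)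
      ((2 * c ^ 1 * -s) • D) p₀ := by
    have hd : HasDerivAt (fun t => Real.cos t ^ 2)
        (2 * Real.cos (φ p₀) ^ 1 * -Real.sin (φ p₀)) (φ p₀) :=
      (Real.hasDerivAt_cos (φ p₀)).pow 2
    exact hd.comp_hasFDerivAt p₀ (hdiff p₀)
  have hk : HasFDerivAt (fun p => Real.cos (φ p) * Real.sin (φ p))
      ((-s * s + c * c) • D) p₀ := by
    have hd : HasDerivAt (fun t => Real.cos t * Real.sin t)
        (-Real.sin (φ p₀) * Real.sin (φ p₀) + Real.cos (φ p₀) * Real.cos (φ p₀)) (φ p₀) :=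
      (Real.hasDerivAt_cos (φ p₀)).mul (Real.hasDerivAt_sin (φ p₀))
    exact hd.comp_hasFDerivAt p₀ (hdiff p₀)
  have hLdiff := (hh.smul (hasFDerivAt_const F p₀)).add (hk.smul (hasFDerivAt_const S p₀))
  have hsymm := second_derivative_symmetric_of_eventually hev hLdiff
    ((1 : ℝ), (0 : ℝ)) ((0 : ℝ), (1 : ℝ))
  simp [hF, hS] at hsymm
  have hAp := hA p₀ hp₀
  have hBp := hB p₀ hp₀
  rw [← hD] at hAp hBp
  rw [hAp, hBp, ← hcdef, ← hsdef] at hsymm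
  have pyth := Real.sin_sq_add_cos_sq (φ p₀)
  rw [← hsdef, ← hcdef] at pyth
  have hcp : c ≠ 0 := hcos p₀ hp₀
  have hc2 : 0 < c ^ 2 := by positivity
  nlinarith [hsymm, pyth, hc2, sq_nonneg s, sq_nonneg (c*s)]
end

section
/- Let A be a symmetric positive definite d×d matrix, x ∈ ℝ^d fixed, and φ : ℝ^d → ℝ a continuous function satisfying |φ(y)| ≤ C₁ + C₂‖y−x‖^k for constants C₁, C₂ ≥ 0 and k ∈ ℕ. Then for any μ ∈ (0, 1/2), the integral of e^{−(y−x)ᵀA(y−x)/(2ε)} φ(y) over the exterior of the ellipsoid {y : (y−x)ᵀA(y−x) ≤ ε^{2μ}} is bounded in absolute value by ε^{d/2} p(ε^{2μ−1}) e^{−ε^{2μ−1}/2} for some polynomial p; in particular it is o(ε^N) for every N as ε → 0⁺. -/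
open Matrix

open MeasureTheory

lemma continuous_quad {d : ℕ} (A : Matrix (Fin d) (Fin d) ℝ) :
    Continuous fun v : Fin d → ℝ => v ⬝ᵥ A.mulVec v := by
  unfold dotProduct mulVec dotProduct
  exact continuous_finset_sum _ fun i _ => (continuous_apply i).mul
    (continuous_finset_sum _ fun j _ => (continuous_const.mul (continuous_apply j)))

lemma posdef_coercive {d : ℕ} {A : Matrix (Fin d) (Fin d) ℝ} (hA : A.PosDef) :
    ∃ c > 0, ∀ v : Fin d → ℝ, c * (v ⬝ᵥ v) ≤ v ⬝ᵥ A.mulVec v := by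
  rcases Nat.eq_zero_or_pos d with hd | hd
  · refine ⟨1, one_pos, fun v => ?_⟩
    subst hd
    simp [dotProduct, mulVec]
  · have hfc : Continuous fun v : Fin d → ℝ => v ⬝ᵥ A.mulVec v := continuous_quad A
    have hS : IsCompact (Metric.sphere (0 : Fin d → ℝ) 1) := isCompact_sphere _ _
    have hne : (Metric.sphere (0 : Fin d → ℝ) 1).Nonempty := by
      refine ⟨Pi.single ⟨0, hd⟩ 1, ?_⟩
      simp [Metric.mem_sphere, Pi.norm_single]
    obtain ⟨v₀, hv₀S, hmin⟩ := hS.exists_isMinOn hne hfc.continuousOn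
    have hv₀ : v₀ ≠ 0 := by
      intro h
      have := Metric.mem_sphere.mp hv₀S
      rw [h] at this; simp at this
    have hm : 0 < v₀ ⬝ᵥ A.mulVec v₀ := by
      have := hA.dotProduct_mulVec_pos hv₀
      simpa using this
    refine ⟨(v₀ ⬝ᵥ A.mulVec v₀) / d, div_pos hm (by exact_mod_cast hd), fun v => ?_⟩
    rcases eq_or_ne v 0 with rfl | hv
    · simp [dotProduct]
    · have ht : 0 < ‖v‖ := norm_pos_iff.mpr hv
      have huS : ‖v‖⁻¹ • v ∈ Metric.sphere (0 : Fin d → ℝ) 1 := by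
        simp [Metric.mem_sphere, norm_smul, abs_of_pos (inv_pos.mpr ht),
          inv_mul_cancel₀ ht.ne']
      have hQu : v₀ ⬝ᵥ A.mulVec v₀ ≤ (‖v‖⁻¹ • v) ⬝ᵥ A.mulVec (‖v‖⁻¹ • v) := hmin huS
      have hscale : (‖v‖⁻¹ • v) ⬝ᵥ A.mulVec (‖v‖⁻¹ • v)
          = ‖v‖⁻¹ * ‖v‖⁻¹ * (v ⬝ᵥ A.mulVec v) := by
        rw [mulVec_smul, smul_dotProduct, dotProduct_smul, smul_eq_mul, smul_eq_mul]
        ring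
      have hdot : v ⬝ᵥ v ≤ d * ‖v‖ ^ 2 := by
        have h2 : ∀ i, v i * v i ≤ ‖v‖ ^ 2 := fun i => by
          have h1 : |v i| ≤ ‖v‖ := by
            simpa [Real.norm_eq_abs] using norm_le_pi_norm v i
          nlinarith [abs_nonneg (v i), abs_mul_abs_self (v i)]
        calc v ⬝ᵥ v = ∑ i, v i * v i := rfl
          _ ≤ ∑ _i : Fin d, ‖v‖ ^ 2 := Finset.sum_le_sum fun i _ => h2 i
          _ = d * ‖v‖ ^ 2 := by simp [mul_comm]
      have hdpos : (0:ℝ) < d := by exact_mod_cast hd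
      rw [hscale] at hQu
      have hinv : ‖v‖⁻¹ * ‖v‖⁻¹ = (‖v‖^2)⁻¹ := by rw [sq, mul_inv]
      rw [hinv] at hQu
      have h3 : v₀ ⬝ᵥ A.mulVec v₀ * ‖v‖^2 ≤ v ⬝ᵥ A.mulVec v := by
        calc v₀ ⬝ᵥ A.mulVec v₀ * ‖v‖^2
            ≤ ((‖v‖^2)⁻¹ * (v ⬝ᵥ A.mulVec v)) * ‖v‖^2 :=
              mul_le_mul_of_nonneg_right hQu (sq_nonneg _)
          _ = v ⬝ᵥ A.mulVec v := by field_simp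
      calc (v₀ ⬝ᵥ A.mulVec v₀) / d * (v ⬝ᵥ v)
          ≤ (v₀ ⬝ᵥ A.mulVec v₀) / d * (d * ‖v‖^2) :=
            mul_le_mul_of_nonneg_left hdot (div_nonneg hm.le hdpos.le)
        _ = v₀ ⬝ᵥ A.mulVec v₀ * ‖v‖^2 := by field_simp
        _ ≤ v ⬝ᵥ A.mulVec v := h3

lemma integrable_exp_neg_dot (d : ℕ) {c : ℝ} (hc : 0 < c) :
    Integrable (fun z : Fin d → ℝ => Real.exp (-c * (z ⬝ᵥ z))) := by
  have h : (fun z : Fin d → ℝ => Real.exp (-c * (z ⬝ᵥ z)))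
      = fun z => ∏ i, Real.exp (-c * (z i)^2) := by
    funext z
    rw [← Real.exp_sum]
    congr 1
    rw [dotProduct, Finset.mul_sum]
    congr 1; funext i; ring
  rw [h]
  exact Integrable.fintype_prod (f := fun _ (t : ℝ) => Real.exp (-c * t^2))
    (fun i => integrable_exp_neg_mul_sq hc)

lemma poly_le_exp {c : ℝ} (hc : 0 < c) (k : ℕ) :
    ∃ B ≥ (0:ℝ), ∀ s : ℝ, 0 ≤ s → (1 + s)^k ≤ B * Real.exp ((c/4) * s) := by
  set a : ℝ := min 1 (c / (4 * (k+1))) with ha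
  have ha0 : 0 < a := lt_min one_pos (by positivity)
  have ha1 : a ≤ 1 := min_le_left _ _
  have hak : a * k ≤ c / 4 := by
    have h1 : a ≤ c / (4 * (k+1)) := min_le_right _ _
    have h3 : a * k ≤ c / (4 * (k+1)) * k :=
      mul_le_mul_of_nonneg_right h1 (Nat.cast_nonneg k)
    have h4 : c / (4 * (k+1)) * k ≤ c / 4 := by
      rw [div_mul_eq_mul_div, div_le_div_iff₀ (by positivity) (by norm_num)]
      nlinarith [Nat.cast_nonneg (α := ℝ) k]
    linarith
  refine ⟨a⁻¹ ^ k, by positivity, fun s hs => ?_⟩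
  have h1 : 1 + s ≤ a⁻¹ * Real.exp (a * s) := by
    have h2 : 1 + a * s ≤ Real.exp (a * s) := by
      have := Real.add_one_le_exp (a * s); linarith
    have h3 : a⁻¹ * (1 + a * s) ≤ a⁻¹ * Real.exp (a * s) :=
      mul_le_mul_of_nonneg_left h2 (by positivity)
    have h4 : 1 + s ≤ a⁻¹ * (1 + a * s) := by
      have hia : 1 ≤ a⁻¹ := (one_le_inv_iff₀.mpr ⟨ha0, ha1⟩)
      have : a⁻¹ * (1 + a * s) = a⁻¹ + s := by field_simp
      rw [this]; linarith
    linarith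
  calc (1 + s)^k ≤ (a⁻¹ * Real.exp (a * s))^k :=
        pow_le_pow_left₀ (by linarith) h1 k
    _ = a⁻¹^k * Real.exp (a * s)^k := mul_pow _ _ _
    _ = a⁻¹^k * Real.exp (a * k * s) := by
        rw [← Real.exp_nat_mul]; ring_nf
    _ ≤ a⁻¹^k * Real.exp ((c/4) * s) := by
        apply mul_le_mul_of_nonneg_left _ (by positivity)
        exact Real.exp_le_exp.mpr (mul_le_mul_of_nonneg_right hak hs)

lemma norm_le_one_add_dot {d : ℕ} (z : Fin d → ℝ) : ‖z‖ ≤ 1 + z ⬝ᵥ z := by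
  have hs : 0 ≤ z ⬝ᵥ z := Finset.sum_nonneg fun i _ => mul_self_nonneg _
  have h1 : ‖z‖ ≤ Real.sqrt (z ⬝ᵥ z) := by
    apply pi_norm_le_iff_of_nonneg (Real.sqrt_nonneg _) |>.mpr
    intro i
    rw [Real.norm_eq_abs, ← Real.sqrt_sq_eq_abs]
    apply Real.sqrt_le_sqrt
    rw [sq]
    exact Finset.single_le_sum (f := fun j => z j * z j)
      (fun j _ => mul_self_nonneg _) (Finset.mem_univ i)
  have h2 : Real.sqrt (z ⬝ᵥ z) ≤ 1 + z ⬝ᵥ z := by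
    have : z ⬝ᵥ z ≤ (1 + z ⬝ᵥ z)^2 := by nlinarith
    calc Real.sqrt (z ⬝ᵥ z) ≤ Real.sqrt ((1 + z ⬝ᵥ z)^2) := Real.sqrt_le_sqrt this
      _ = 1 + z ⬝ᵥ z := Real.sqrt_sq (by linarith)
  linarith

/-- Gaussian tail estimate: the integral of a Gaussian times a polynomially bounded
function over the exterior of the ellipsoid of radius ε^μ is exponentially small. -/
theorem stmt4 (d : ℕ) (A : Matrix (Fin d) (Fin d) ℝ) (hA : A.PosDef)
    (x : Fin d → ℝ) (φ : (Fin d → ℝ) → ℝ) (hφ : Continuous φ)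
    (C₁ C₂ : ℝ) (hC₁ : 0 ≤ C₁) (hC₂ : 0 ≤ C₂) (k : ℕ)
    (hgrow : ∀ y, |φ y| ≤ C₁ + C₂ * ‖y - x‖ ^ k)
    (μ : ℝ) (hμ : μ ∈ Set.Ioo (0:ℝ) (1/2)) :
    ∃ p : Polynomial ℝ, ∀ᶠ ε in nhdsWithin 0 (Set.Ioi (0:ℝ)),
      |∫ y in {y : Fin d → ℝ | ε ^ (2*μ) < (y - x) ⬝ᵥ A.mulVec (y - x)},
          Real.exp (-((y - x) ⬝ᵥ A.mulVec (y - x)) / (2 * ε)) * φ y|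
        ≤ ε ^ ((d:ℝ)/2) * p.eval (ε ^ (2*μ - 1)) * Real.exp (-(ε ^ (2*μ - 1)) / 2) := by
  obtain ⟨c, hc, hcoer⟩ := posdef_coercive hA
  obtain ⟨B, hB, hpoly⟩ := poly_le_exp hc k
  set M : ℝ := C₁ + C₂ * B with hM
  have hc4 : (0:ℝ) < c/4 := by positivity
  have hM0 : 0 ≤ M := by positivity
  set G : (Fin d → ℝ) → ℝ := fun y => M * Real.exp (-(c/4) * ((y - x) ⬝ᵥ (y - x)))
    with hGdef
  have hGint : Integrable G := by
    have := (integrable_exp_neg_dot d hc4).comp_sub_right (g := x)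
    exact this.const_mul M
  have hG0 : ∀ y, 0 ≤ G y := fun y => by
    simp only [hGdef]; positivity
  set J : ℝ := ∫ y, G y with hJdef
  have hJ0 : 0 ≤ J := integral_nonneg hG0
  -- pointwise majorant bound
  have hmaj : ∀ y : Fin d → ℝ,
      Real.exp (-((y - x) ⬝ᵥ A.mulVec (y - x)) / 2) * |φ y| ≤ G y := by
    intro y
    set z : Fin d → ℝ := y - x with hz
    set s : ℝ := z ⬝ᵥ z with hsdef
    have hs0 : 0 ≤ s := Finset.sum_nonneg fun i _ => mul_self_nonneg _
    have hQ : c * s ≤ z ⬝ᵥ A.mulVec z := hcoer z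
    have hφb : |φ y| ≤ C₁ + C₂ * (1 + s)^k := by
      refine (hgrow y).trans ?_
      have h := pow_le_pow_left₀ (norm_nonneg z) (norm_le_one_add_dot z) k
      have := mul_le_mul_of_nonneg_left h hC₂
      linarith
    have e1 : Real.exp (-(z ⬝ᵥ A.mulVec z) / 2) ≤ Real.exp (-(c*s)/2) :=
      Real.exp_le_exp.mpr (by linarith)
    calc Real.exp (-(z ⬝ᵥ A.mulVec z) / 2) * |φ y|
        ≤ Real.exp (-(c*s)/2) * (C₁ + C₂ * (1 + s)^k) :=
          mul_le_mul e1 hφb (abs_nonneg _) (Real.exp_pos _).le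
      _ ≤ Real.exp (-(c*s)/2) * (C₁ + C₂ * (B * Real.exp ((c/4) * s))) := by
          have h := hpoly s hs0
          have h2 := mul_le_mul_of_nonneg_left h hC₂
          have h3 : (0:ℝ) < Real.exp (-(c*s)/2) := Real.exp_pos _
          nlinarith
      _ = C₁ * Real.exp (-(c*s)/2)
          + C₂ * B * (Real.exp (-(c*s)/2) * Real.exp ((c/4) * s)) := by ring
      _ = C₁ * Real.exp (-(c*s)/2) + C₂ * B * Real.exp (-(c/4) * s) := by
          rw [← Real.exp_add]; ring_nf
      _ ≤ C₁ * Real.exp (-(c/4) * s) + C₂ * B * Real.exp (-(c/4) * s) := by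
          have h4 : Real.exp (-(c*s)/2) ≤ Real.exp (-(c/4) * s) :=
            Real.exp_le_exp.mpr (by nlinarith)
          nlinarith [Real.exp_pos (-(c/4) * s)]
      _ = G y := by rw [hGdef]; ring
  -- choose the polynomial
  obtain ⟨hμ0, hμ1⟩ := hμ
  have hδ : 0 < 1 - 2*μ := by linarith
  set n : ℕ := ⌈((d:ℝ)/2) / (1 - 2*μ)⌉₊ with hn
  have hNe : (d:ℝ)/2 + (2*μ - 1) * n ≤ 0 := by
    have h1 : ((d:ℝ)/2) / (1 - 2*μ) ≤ n := Nat.le_ceil _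
    have h2 : (d:ℝ)/2 ≤ n * (1 - 2*μ) := by
      rw [div_le_iff₀ hδ] at h1; linarith
    nlinarith
  refine ⟨Polynomial.C (Real.exp (1/2) * J) * Polynomial.X ^ n, ?_⟩
  have hIoo : Set.Ioo (0:ℝ) 1 ∈ nhdsWithin (0:ℝ) (Set.Ioi 0) :=
    Ioo_mem_nhdsGT_of_mem ⟨le_refl _, by norm_num⟩
  filter_upwards [hIoo] with ε hε
  obtain ⟨hε0, hε1⟩ := hε
  set R : ℝ := ε ^ (2*μ) with hRdef
  set T : ℝ := ε ^ (2*μ - 1) with hTdef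
  have hR0 : 0 < R := Real.rpow_pos_of_pos hε0 _
  have hR1 : R ≤ 1 := Real.rpow_le_one hε0.le hε1.le (by linarith)
  have hT : T = R / ε := by
    rw [eq_div_iff hε0.ne', hTdef, hRdef, ← Real.rpow_add_one hε0.ne']
    ring_nf
  -- the set is open hence measurable
  have hQcont : Continuous fun y : Fin d → ℝ => (y - x) ⬝ᵥ A.mulVec (y - x) :=
    (continuous_quad A).comp (continuous_id.sub continuous_const)
  have hSmeas : MeasurableSet {y : Fin d → ℝ | R < (y - x) ⬝ᵥ A.mulVec (y - x)} :=
    (isOpen_lt continuous_const hQcont).measurableSet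
  set K : ℝ := Real.exp (1/2) * Real.exp (-T/2) with hKdef
  have hK0 : 0 ≤ K := by positivity
  -- pointwise bound on the tail set
  have hf_le : ∀ y ∈ {y : Fin d → ℝ | R < (y - x) ⬝ᵥ A.mulVec (y - x)},
      ‖Real.exp (-((y - x) ⬝ᵥ A.mulVec (y - x)) / (2 * ε)) * φ y‖ ≤ K * G y := by
    intro y hy
    set Q : ℝ := (y - x) ⬝ᵥ A.mulVec (y - x) with hQdef
    have hQR : R ≤ Q := (le_of_lt hy)
    have h2ε : (0:ℝ) < 2*ε := by linarith
    have key : -Q / (2*ε) ≤ 1/2 + (-T/2) + (-Q/2) := by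
      rw [hT, div_le_iff₀ h2ε]
      have e2 : (1/2 + (-(R/ε)/2) + (-Q/2)) * (2*ε) = ε - R - Q*ε := by
        field_simp; ring
      rw [e2]
      nlinarith [mul_le_mul_of_nonneg_right hQR (by linarith : (0:ℝ) ≤ 1 - ε)]
    have e3 : Real.exp (-Q / (2*ε)) ≤ Real.exp (1/2) * Real.exp (-T/2)
        * Real.exp (-Q/2) := by
      rw [← Real.exp_add, ← Real.exp_add]
      exact Real.exp_le_exp.mpr key
    calc ‖Real.exp (-Q / (2 * ε)) * φ y‖
        = Real.exp (-Q / (2 * ε)) * |φ y| := by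
          rw [norm_mul, Real.norm_eq_abs, Real.norm_eq_abs,
            abs_of_pos (Real.exp_pos _)]
      _ ≤ (Real.exp (1/2) * Real.exp (-T/2) * Real.exp (-Q/2)) * |φ y| :=
          mul_le_mul_of_nonneg_right e3 (abs_nonneg _)
      _ = (Real.exp (1/2) * Real.exp (-T/2)) * (Real.exp (-Q/2) * |φ y|) := by ring
      _ ≤ K * G y := by
          rw [hKdef]
          exact mul_le_mul_of_nonneg_left (hmaj y) (by positivity)
  -- assemble
  have step1 : |∫ y in {y : Fin d → ℝ | R < (y - x) ⬝ᵥ A.mulVec (y - x)},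
        Real.exp (-((y - x) ⬝ᵥ A.mulVec (y - x)) / (2 * ε)) * φ y|
      ≤ ∫ y in {y : Fin d → ℝ | R < (y - x) ⬝ᵥ A.mulVec (y - x)},
        ‖Real.exp (-((y - x) ⬝ᵥ A.mulVec (y - x)) / (2 * ε)) * φ y‖ := by
    rw [← Real.norm_eq_abs]
    exact norm_integral_le_integral_norm _
  have step2 : ∫ y in {y : Fin d → ℝ | R < (y - x) ⬝ᵥ A.mulVec (y - x)},
        ‖Real.exp (-((y - x) ⬝ᵥ A.mulVec (y - x)) / (2 * ε)) * φ y‖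
      ≤ ∫ y in {y : Fin d → ℝ | R < (y - x) ⬝ᵥ A.mulVec (y - x)}, K * G y := by
    apply integral_mono_of_nonneg
    · exact Filter.Eventually.of_forall fun y => norm_nonneg _
    · exact (hGint.const_mul K).restrict
    · exact (ae_restrict_iff' hSmeas).mpr (Filter.Eventually.of_forall hf_le)
  have step3 : ∫ y in {y : Fin d → ℝ | R < (y - x) ⬝ᵥ A.mulVec (y - x)}, K * G y
      = K * ∫ y in {y : Fin d → ℝ | R < (y - x) ⬝ᵥ A.mulVec (y - x)}, G y :=
    integral_const_mul K G
  have step4 : ∫ y in {y : Fin d → ℝ | R < (y - x) ⬝ᵥ A.mulVec (y - x)}, G y ≤ J :=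
    setIntegral_le_integral hGint (Filter.Eventually.of_forall hG0)
  have hmain : |∫ y in {y : Fin d → ℝ | R < (y - x) ⬝ᵥ A.mulVec (y - x)},
        Real.exp (-((y - x) ⬝ᵥ A.mulVec (y - x)) / (2 * ε)) * φ y| ≤ K * J := by
    calc _ ≤ _ := step1
      _ ≤ _ := step2
      _ = _ := step3
      _ ≤ K * J := mul_le_mul_of_nonneg_left step4 hK0
  -- compare with the polynomial bound
  have hone : 1 ≤ ε ^ ((d:ℝ)/2) * T^n := by
    have e4 : ε ^ ((d:ℝ)/2) * T^n = ε ^ ((d:ℝ)/2 + (2*μ - 1) * n) := by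
      rw [hTdef, ← Real.rpow_natCast (ε ^ (2*μ - 1)) n, ← Real.rpow_mul hε0.le,
        ← Real.rpow_add hε0]
    rw [e4]
    exact Real.one_le_rpow_of_pos_of_le_one_of_nonpos hε0 hε1.le hNe
  have heval : (Polynomial.C (Real.exp (1/2) * J) * Polynomial.X ^ n).eval T
      = Real.exp (1/2) * J * T^n := by
    simp [Polynomial.eval_mul, Polynomial.eval_pow]
  have final : K * J ≤ ε ^ ((d:ℝ)/2) * (Real.exp (1/2) * J * T^n) * Real.exp (-T/2) := by
    calc K * J = (Real.exp (1/2) * J * Real.exp (-T/2)) * 1 := by rw [hKdef]; ring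
      _ ≤ (Real.exp (1/2) * J * Real.exp (-T/2)) * (ε ^ ((d:ℝ)/2) * T^n) :=
          mul_le_mul_of_nonneg_left hone
            (mul_nonneg (mul_nonneg (Real.exp_pos _).le hJ0) (Real.exp_pos _).le)
      _ = ε ^ ((d:ℝ)/2) * (Real.exp (1/2) * J * T^n) * Real.exp (-T/2) := by ring
  rw [heval]
  exact hmain.trans final
end
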